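/- arXiv:1603.01306 — 4 statements merged into one kernel-verified Lean document; each statement's English description precedes it below -/
import Mathlib

section
/- Let N ≥ 10 be an integer with N ≡ 4 (mod 6), and suppose π/3 ≤ θ ≤ (π/3)(1 + 1/(2N)). Then 1/2 ≤ |cos(Nθ/2)| ≤ 1/√2. -/
open Real

theorem stmt_1 (N : ℕ) (hN : 10 ≤ N) (hmod : N % 6 = 4) (θ : ℝ)
    (h1 : π / 3 ≤ θ) (h2 : θ ≤ (π / 3) * (1 + 1 / (2 * N))) :
    1 / 2 ≤ |Real.cos (N * θ / 2)| ∧ |Real.cos (N * θ / 2)| ≤ 1 / Real.sqrt 2 := by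
  obtain ⟨k, hk⟩ : ∃ k : ℕ, N = 6 * k + 4 := ⟨N / 6, by omega⟩
  have hπ := Real.pi_pos
  have hNr : (N : ℝ) = 6 * k + 4 := by rw [hk]; push_cast; ring
  set y : ℝ := (N : ℝ) * θ / 2 - k * π with hy
  clear_value y
  have hcos : |Real.cos ((N : ℝ) * θ / 2)| = |Real.cos y| := by
    have : (N : ℝ) * θ / 2 = y + (k : ℤ) * π := by push_cast [hy]; ring
    rw [this, Real.cos_add_int_mul_pi, abs_mul]
    simp [abs_pow]
  -- bounds on y
  have hNpos : (0:ℝ) < 2 * N := by positivity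
  have hub : (N : ℝ) * θ / 2 ≤ k * π + 3 * π / 4 := by
    have h2' : (N : ℝ) * θ ≤ (N : ℝ) * ((π / 3) * (1 + 1 / (2 * N))) := by
      apply mul_le_mul_of_nonneg_left h2 (by positivity)
    have hexp : (N : ℝ) * ((π / 3) * (1 + 1 / (2 * N))) = (N:ℝ) * π / 3 + π / 6 := by
      field_simp
      ring
    rw [hexp] at h2'
    rw [hNr] at h2' ⊢
    nlinarith
  have hlb : k * π + 2 * π / 3 ≤ (N : ℝ) * θ / 2 := by
    have h1' : (N : ℝ) * (π / 3) ≤ (N : ℝ) * θ :=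
      mul_le_mul_of_nonneg_left h1 (by positivity)
    rw [hNr] at h1' ⊢
    nlinarith
  have hy1 : 2 * π / 3 ≤ y := by rw [hy]; linarith
  have hy2 : y ≤ 3 * π / 4 := by rw [hy]; linarith
  have hcos1 : Real.cos y ≤ Real.cos (2 * π / 3) :=
    Real.cos_le_cos_of_nonneg_of_le_pi (by positivity) (by linarith) hy1
  have hcos2 : Real.cos (3 * π / 4) ≤ Real.cos y :=
    Real.cos_le_cos_of_nonneg_of_le_pi (by nlinarith) (by linarith) hy2
  have hv1 : Real.cos (2 * π / 3) = -(1/2) := by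
    have : (2:ℝ) * π / 3 = π - π / 3 := by ring
    rw [this, Real.cos_pi_sub, Real.cos_pi_div_three]
  have hv2 : Real.cos (3 * π / 4) = -(Real.sqrt 2 / 2) := by
    have : (3:ℝ) * π / 4 = π - π / 4 := by ring
    rw [this, Real.cos_pi_sub, Real.cos_pi_div_four]
  rw [hv1] at hcos1
  rw [hv2] at hcos2
  have habs : |Real.cos y| = -Real.cos y := abs_of_nonpos (by linarith)
  have hs : (0:ℝ) < Real.sqrt 2 := by positivity
  have hss : Real.sqrt 2 * Real.sqrt 2 = 2 := Real.mul_self_sqrt (by norm_num)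
  have hrt : (1:ℝ) / Real.sqrt 2 = Real.sqrt 2 / 2 := by
    field_simp
    rw [Real.sq_sqrt (by norm_num)]
  rw [hcos, habs, hrt]
  constructor <;> linarith
end

section
/- The function X ↦ (2 sin(π/6 + π/X))^{-X} is monotonically decreasing for real X > 6/5. -/
open Real

lemma sin_u_pos' {t : ℝ} (h0 : 0 < t) (h1 : t < 5 * π / 6) :
    0 < Real.sin (π / 6 + t) := by
  have hπ := Real.pi_pos
  apply Real.sin_pos_of_pos_of_lt_pi <;> linarith

lemma phi_deriv {t : ℝ} (hs : Real.sin (π / 6 + t) ≠ 0) :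
    HasDerivAt (fun s : ℝ => Real.log (2 * Real.sin (π / 6 + s)) -
        s * (Real.cos (π / 6 + s) / Real.sin (π / 6 + s)))
      (t / (Real.sin (π / 6 + t)) ^ 2) t := by
  have h1 : HasDerivAt (fun s : ℝ => π / 6 + s) 1 t := (hasDerivAt_id t).const_add _
  have hsin : HasDerivAt (fun s : ℝ => Real.sin (π / 6 + s)) (Real.cos (π / 6 + t)) t := by
    simpa using h1.sin
  have hcos : HasDerivAt (fun s : ℝ => Real.cos (π / 6 + s)) (-Real.sin (π / 6 + t)) t := by
    simpa using h1.cos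
  have h2 : HasDerivAt (fun s : ℝ => 2 * Real.sin (π / 6 + s))
      (2 * Real.cos (π / 6 + t)) t := hsin.const_mul 2
  have hne : 2 * Real.sin (π / 6 + t) ≠ 0 := by
    simp [hs]
  have hlog := h2.log hne
  have hdiv := hcos.div hsin hs
  have hpy := Real.sin_sq_add_cos_sq (π / 6 + t)
  have hdiv' : HasDerivAt (fun s : ℝ => Real.cos (π / 6 + s) / Real.sin (π / 6 + s))
      (-(1 / (Real.sin (π / 6 + t)) ^ 2)) t := by
    refine hdiv.congr_deriv ?_
    rw [show -Real.sin (π / 6 + t) * Real.sin (π / 6 + t) -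
        Real.cos (π / 6 + t) * Real.cos (π / 6 + t) = -1 by nlinarith [hpy]]
    ring
  have hprod := (hasDerivAt_id t).mul hdiv'
  have h := hlog.sub hprod
  refine h.congr_deriv ?_
  simp only [id]
  field_simp
  ring

lemma phi_pos {t : ℝ} (h0 : 0 < t) (h1 : t < 5 * π / 6) :
    0 < Real.log (2 * Real.sin (π / 6 + t)) -
        t * (Real.cos (π / 6 + t) / Real.sin (π / 6 + t)) := by
  set φ : ℝ → ℝ := fun s => Real.log (2 * Real.sin (π / 6 + s)) -
      s * (Real.cos (π / 6 + s) / Real.sin (π / 6 + s)) with hφ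
  have key : ∀ s ∈ Set.Icc (0:ℝ) t, Real.sin (π / 6 + s) ≠ 0 := by
    intro s hs
    have hπ := Real.pi_pos
    have : 0 < Real.sin (π / 6 + s) := by
      apply Real.sin_pos_of_pos_of_lt_pi <;>
        [linarith [hs.1]; linarith [hs.2]]
    linarith
  have hmono : StrictMonoOn φ (Set.Icc 0 t) := by
    apply strictMonoOn_of_deriv_pos (convex_Icc 0 t)
    · intro s hs
      exact (phi_deriv (key s hs)).continuousAt.continuousWithinAt
    · intro s hs
      rw [interior_Icc] at hs
      rw [(phi_deriv (key s ⟨hs.1.le, hs.2.le⟩)).deriv]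
      have hsp : 0 < Real.sin (π / 6 + s) := by
        apply Real.sin_pos_of_pos_of_lt_pi
        · linarith [Real.pi_pos, hs.1]
        · linarith [hs.2]
      exact div_pos hs.1 (by positivity)
  have h := hmono (Set.left_mem_Icc.2 h0.le) (Set.right_mem_Icc.2 h0.le) h0
  have hφ0 : φ 0 = 0 := by
    simp [hφ, Real.sin_pi_div_six]
  rw [hφ0] at h
  exact h

lemma g_deriv {X : ℝ} (hX : 6 / 5 < X) :
    HasDerivAt (fun Z : ℝ => Z * Real.log (2 * Real.sin (π / 6 + π / Z)))
      (Real.log (2 * Real.sin (π / 6 + π / X)) -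
        (π / X) * (Real.cos (π / 6 + π / X) / Real.sin (π / 6 + π / X))) X := by
  have hπ := Real.pi_pos
  have hX0 : (0:ℝ) < X := by linarith
  have hX0' : X ≠ 0 := ne_of_gt hX0
  have ht0 : 0 < π / X := by positivity
  have ht1 : π / X < 5 * π / 6 := by
    rw [div_lt_iff₀ hX0]
    nlinarith
  have hsp : 0 < Real.sin (π / 6 + π / X) := sin_u_pos' ht0 ht1
  have hs : Real.sin (π / 6 + π / X) ≠ 0 := ne_of_gt hsp
  have hinv : HasDerivAt (fun Z : ℝ => π / Z) (-(π / X ^ 2)) X := by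
    simpa [div_eq_mul_inv, neg_mul, mul_comm] using (hasDerivAt_inv hX0').const_mul π
  have hu : HasDerivAt (fun Z : ℝ => π / 6 + π / Z) (-(π / X ^ 2)) X := hinv.const_add _
  have hsin : HasDerivAt (fun Z : ℝ => Real.sin (π / 6 + π / Z))
      (Real.cos (π / 6 + π / X) * (-(π / X ^ 2))) X :=
    hu.sin
  have h2 : HasDerivAt (fun Z : ℝ => 2 * Real.sin (π / 6 + π / Z))
      (2 * (Real.cos (π / 6 + π / X) * (-(π / X ^ 2)))) X := hsin.const_mul 2
  have hne : 2 * Real.sin (π / 6 + π / X) ≠ 0 := by simp [hs]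
  have hlog := h2.log hne
  have hlog' : HasDerivAt (fun Z : ℝ => Real.log (2 * Real.sin (π / 6 + π / Z)))
      (-(π / X ^ 2) * (Real.cos (π / 6 + π / X) / Real.sin (π / 6 + π / X))) X := by
    convert hlog using 1
    field_simp
  have h := (hasDerivAt_id X).mul hlog'
  refine h.congr_deriv ?_
  have hxx : X * (π / X ^ 2) = π / X := by
    field_simp
  simp only [id_eq, one_mul]
  linear_combination (-(Real.cos (π / 6 + π / X) / Real.sin (π / 6 + π / X))) * hxx

theorem stmt_2 :
    AntitoneOn (fun X : ℝ => (2 * Real.sin (π / 6 + π / X)) ^ (-X)) (Set.Ioi (6 / 5)) := by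
  have hπ := Real.pi_pos
  have base_pos : ∀ X : ℝ, 6 / 5 < X → 0 < 2 * Real.sin (π / 6 + π / X) := by
    intro X hX
    have hX0 : (0:ℝ) < X := by linarith
    have ht0 : 0 < π / X := by positivity
    have ht1 : π / X < 5 * π / 6 := by
      rw [div_lt_iff₀ hX0]; nlinarith
    have := sin_u_pos' ht0 ht1
    linarith
  intro X hX Y hY hXY
  simp only [Set.mem_Ioi] at hX hY
  have hbX := base_pos X hX
  have hbY := base_pos Y hY
  simp only
  rw [Real.rpow_def_of_pos hbX, Real.rpow_def_of_pos hbY]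
  apply Real.exp_le_exp.2
  have hg : X * Real.log (2 * Real.sin (π / 6 + π / X)) ≤
      Y * Real.log (2 * Real.sin (π / 6 + π / Y)) := by
    rcases eq_or_lt_of_le hXY with rfl | hlt
    · exact le_rfl
    · have hmono : StrictMonoOn (fun Z : ℝ => Z * Real.log (2 * Real.sin (π / 6 + π / Z)))
          (Set.Icc X Y) := by
        apply strictMonoOn_of_deriv_pos (convex_Icc X Y)
        · intro s hs
          have hs6 : 6 / 5 < s := lt_of_lt_of_le hX hs.1
          exact (g_deriv hs6).continuousAt.continuousWithinAt
        · intro s hs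
          rw [interior_Icc] at hs
          have hs6 : 6 / 5 < s := lt_trans hX hs.1
          rw [(g_deriv hs6).deriv]
          have hs0 : (0:ℝ) < s := by linarith
          have ht0 : 0 < π / s := by positivity
          have ht1 : π / s < 5 * π / 6 := by
            rw [div_lt_iff₀ hs0]; nlinarith
          exact phi_pos ht0 ht1
      exact (hmono (Set.left_mem_Icc.2 hXY) (Set.right_mem_Icc.2 hXY) hlt).le
  nlinarith [hg]
end

section
/- The function g(Y) = -log(2 sin(π/6 + Y)) + Y·cot(π/6 + Y) satisfies g(Y) ≤ 0 for all Y with 0 ≤ Y < 5π/6. -/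
open Real

private lemma g_hasDerivAt (x : ℝ) (hs : Real.sin (π / 6 + x) ≠ 0) :
    HasDerivAt (fun y => -Real.log (2 * Real.sin (π / 6 + y)) +
      y * (Real.cos (π / 6 + y) / Real.sin (π / 6 + y)))
      (-x / (Real.sin (π / 6 + x)) ^ 2) x := by
  have hg : HasDerivAt (fun y : ℝ => π / 6 + y) 1 x := (hasDerivAt_id x).const_add _
  have hsin : HasDerivAt (fun y => Real.sin (π / 6 + y)) (Real.cos (π / 6 + x) * 1) x := hg.sin
  have hcos : HasDerivAt (fun y => Real.cos (π / 6 + y)) (-Real.sin (π / 6 + x) * 1) x := hg.cos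
  have h2 : HasDerivAt (fun y => 2 * Real.sin (π / 6 + y)) (2 * (Real.cos (π / 6 + x) * 1)) x :=
    hsin.const_mul 2
  have hlog : HasDerivAt (fun y => Real.log (2 * Real.sin (π / 6 + y)))
      (2 * (Real.cos (π / 6 + x) * 1) / (2 * Real.sin (π / 6 + x))) x :=
    h2.log (by simpa using hs)
  have hdiv := hcos.div hsin hs
  have := (hlog.neg).add ((hasDerivAt_id x).mul hdiv)
  refine this.congr_deriv ?_
  symm
  have hpy := Real.sin_sq_add_cos_sq (π / 6 + x)
  simp only [mul_one, one_mul, id_eq, Pi.div_apply]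
  rw [show -Real.sin (π / 6 + x) * Real.sin (π / 6 + x) -
      Real.cos (π / 6 + x) * Real.cos (π / 6 + x) = -1 from by nlinarith [hpy]]
  field_simp
  ring

theorem stmt_3 (Y : ℝ) (h0 : 0 ≤ Y) (h1 : Y < 5 * π / 6) :
    -Real.log (2 * Real.sin (π / 6 + Y)) +
      Y * (Real.cos (π / 6 + Y) / Real.sin (π / 6 + Y)) ≤ 0 := by
  have hpi : 0 < π := Real.pi_pos
  have hspos : ∀ x ∈ Set.Icc 0 Y, 0 < Real.sin (π / 6 + x) := by
    intro x hx
    apply Real.sin_pos_of_pos_of_lt_pi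
    · nlinarith [hx.1]
    · nlinarith [hx.2, h1]
  have key : ∀ x ∈ Set.Icc 0 Y, HasDerivAt
      (fun y => -Real.log (2 * Real.sin (π / 6 + y)) +
        y * (Real.cos (π / 6 + y) / Real.sin (π / 6 + y)))
      (-x / (Real.sin (π / 6 + x)) ^ 2) x :=
    fun x hx => g_hasDerivAt x (ne_of_gt (hspos x hx))
  have hanti : AntitoneOn (fun y => -Real.log (2 * Real.sin (π / 6 + y)) +
      y * (Real.cos (π / 6 + y) / Real.sin (π / 6 + y))) (Set.Icc 0 Y) := by
    apply antitoneOn_of_deriv_nonpos (convex_Icc 0 Y)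
    · exact fun x hx => (key x hx).continuousAt.continuousWithinAt
    · intro x hx
      rw [interior_Icc] at hx
      exact ((key x ⟨hx.1.le, hx.2.le⟩).differentiableAt).differentiableWithinAt
    · intro x hx
      rw [interior_Icc] at hx
      rw [(key x ⟨hx.1.le, hx.2.le⟩).deriv]
      apply div_nonpos_of_nonpos_of_nonneg
      · linarith [hx.1]
      · positivity
  have h00 : (fun y => -Real.log (2 * Real.sin (π / 6 + y)) +
      y * (Real.cos (π / 6 + y) / Real.sin (π / 6 + y))) 0 = 0 := by
    simp [Real.sin_pi_div_six]
  calc -Real.log (2 * Real.sin (π / 6 + Y)) +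
      Y * (Real.cos (π / 6 + Y) / Real.sin (π / 6 + Y))
      ≤ -Real.log (2 * Real.sin (π / 6 + 0)) +
        0 * (Real.cos (π / 6 + 0) / Real.sin (π / 6 + 0)) :=
        hanti (Set.left_mem_Icc.mpr h0) (Set.right_mem_Icc.mpr h0) h0
    _ = 0 := by simp [Real.sin_pi_div_six]
end

section
/- The function X ↦ (2 cos(π/3 + π/(2X)))^X is monotonically increasing for real X ≥ 3. -/
open Real

lemma aux_hasDerivAt_h (s : ℝ) (hc : Real.cos (π/3 + s) ≠ 0) :
    HasDerivAt (fun s => Real.log (2 * Real.cos (π/3 + s)) + s * Real.tan (π/3 + s))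
      (s / Real.cos (π/3 + s) ^ 2) s := by
  have h1 : HasDerivAt (fun s : ℝ => π/3 + s) 1 s := by
    simpa using (hasDerivAt_id s).const_add (π/3)
  have h2 : HasDerivAt (fun s : ℝ => Real.cos (π/3 + s)) (-Real.sin (π/3 + s) * 1) s :=
    (Real.hasDerivAt_cos _).comp s h1
  have h3 := h2.const_mul (2 : ℝ)
  have h4 := h3.log (by simpa using mul_ne_zero two_ne_zero hc)
  have h5 : HasDerivAt (fun s : ℝ => Real.tan (π/3 + s)) (1 / Real.cos (π/3 + s) ^ 2 * 1) s :=
    (Real.hasDerivAt_tan hc).comp s h1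
  have h6 := (hasDerivAt_id s).mul h5
  have h7 := h4.add h6
  refine h7.congr_deriv ?_
  simp only [id_eq]
  rw [Real.tan_eq_sin_div_cos]
  field_simp
  ring

lemma aux_cos_pos {s : ℝ} (h0 : 0 ≤ s) (h6 : s < π/6) : 0 < Real.cos (π/3 + s) := by
  apply Real.cos_pos_of_mem_Ioo
  constructor
  · nlinarith [Real.pi_pos]
  · nlinarith [Real.pi_pos]

lemma aux_key {t : ℝ} (h0 : 0 ≤ t) (h6 : t < π/6) :
    0 ≤ Real.log (2 * Real.cos (π/3 + t)) + t * Real.tan (π/3 + t) := by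
  set h : ℝ → ℝ := fun s => Real.log (2 * Real.cos (π/3 + s)) + s * Real.tan (π/3 + s) with hh
  have hcos : ∀ s ∈ Set.Icc (0:ℝ) t, 0 < Real.cos (π/3 + s) := fun s hs =>
    aux_cos_pos hs.1 (lt_of_le_of_lt hs.2 h6)
  have hder : ∀ s ∈ Set.Icc (0:ℝ) t, HasDerivAt h (s / Real.cos (π/3 + s) ^ 2) s :=
    fun s hs => aux_hasDerivAt_h s (hcos s hs).ne'
  have hmono : MonotoneOn h (Set.Icc 0 t) := by
    apply monotoneOn_of_hasDerivWithinAt_nonneg (convex_Icc 0 t)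
      (fun s hs => (hder s hs).continuousAt.continuousWithinAt)
      (fun s hs => ((hder s (interior_subset hs)).hasDerivWithinAt))
    intro s hs
    rw [interior_Icc] at hs
    exact div_nonneg hs.1.le (sq_nonneg _)
  have h00 : h 0 = 0 := by
    simp [hh, Real.cos_pi_div_three]
  have := hmono (Set.left_mem_Icc.mpr h0) (Set.right_mem_Icc.mpr h0) h0
  rw [h00] at this
  exact this

lemma aux_hasDerivAt_g {X : ℝ} (hX : 3 < X) :
    HasDerivAt (fun X : ℝ => Real.log (2 * Real.cos (π/3 + π/(2*X))) * X)
      (Real.log (2 * Real.cos (π/3 + π/(2*X))) + (π/(2*X)) * Real.tan (π/3 + π/(2*X))) X := by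
  have hX0 : X ≠ 0 := by linarith
  have hpi := Real.pi_pos
  have ht0 : 0 < π/(2*X) := by positivity
  have ht6 : π/(2*X) < π/6 := by
    rw [div_lt_div_iff₀ (by linarith) (by norm_num)]
    nlinarith
  have hc : 0 < Real.cos (π/3 + π/(2*X)) := aux_cos_pos ht0.le ht6
  simp only [div_eq_mul_inv]
  have hd1 : HasDerivAt (fun X : ℝ => 2*X) 2 X := by
    simpa using (hasDerivAt_id X).const_mul (2:ℝ)
  have hd2 := hd1.inv (by simpa using hX0)
  have hd3 := hd2.const_mul π
  have hd4 := hd3.const_add (π * 3⁻¹)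
  have hd5 := (Real.hasDerivAt_cos _).comp X hd4
  have hd6 := hd5.const_mul (2 : ℝ)
  have hd7 := hd6.log (by
    have : (0:ℝ) < 2 * Real.cos (π * 3⁻¹ + π * (2*X)⁻¹) := by
      rw [show π * 3⁻¹ + π * (2*X)⁻¹ = π/3 + π/(2*X) by rw [div_eq_mul_inv, div_eq_mul_inv]
      ]
      linarith
    exact this.ne')
  have hd8 := hd7.mul (hasDerivAt_id X)
  refine hd8.congr_deriv ?_
  simp only [Pi.inv_apply]
  rw [Real.tan_eq_sin_div_cos]
  have hcne : Real.cos (π * 3⁻¹ + π * (2*X)⁻¹) ≠ 0 := by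
    rw [show π * 3⁻¹ + π * (2*X)⁻¹ = π/3 + π/(2*X) by rw [div_eq_mul_inv, div_eq_mul_inv]]
    exact hc.ne'
  rw [show π/3 + π/(2*X) = π * 3⁻¹ + π * (2*X)⁻¹ by rw [div_eq_mul_inv, div_eq_mul_inv]] at *
  simp only [Function.comp_apply, Function.comp, id_eq]
  set C := Real.cos (π * 3⁻¹ + π * (2*X)⁻¹) with hC
  set S := Real.sin (π * 3⁻¹ + π * (2*X)⁻¹) with hS
  have h2X : (2*X) ≠ 0 := by simpa using hX0
  field_simp
  ring

theorem stmt_5 :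
    MonotoneOn (fun X : ℝ => (2 * Real.cos (π / 3 + π / (2 * X))) ^ X) (Set.Ici 3) := by
  have hpi := Real.pi_pos
  have hbase_nonneg : ∀ Y : ℝ, 3 ≤ Y → 0 ≤ 2 * Real.cos (π/3 + π/(2*Y)) := by
    intro Y hY
    have hY0 : (0:ℝ) < Y := by linarith
    have ht0 : 0 < π/(2*Y) := by positivity
    have ht6 : π/(2*Y) ≤ π/6 := by
      rw [div_le_div_iff₀ (by linarith) (by norm_num)]
      nlinarith
    have : 0 ≤ Real.cos (π/3 + π/(2*Y)) := by
      apply Real.cos_nonneg_of_mem_Icc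
      constructor <;> [nlinarith; nlinarith]
    linarith
  have hbase_pos : ∀ Y : ℝ, 3 < Y → 0 < 2 * Real.cos (π/3 + π/(2*Y)) := by
    intro Y hY
    have ht0 : 0 < π/(2*Y) := by positivity
    have ht6 : π/(2*Y) < π/6 := by
      rw [div_lt_div_iff₀ (by linarith) (by norm_num)]
      nlinarith
    have := aux_cos_pos ht0.le ht6
    linarith
  intro X hX Y hY hXY
  simp only [Set.mem_Ici] at hX hY
  rcases eq_or_lt_of_le hX with h3 | h3
  · -- X = 3 : LHS = 0
    have hb : 2 * Real.cos (π/3 + π/(2*X)) = 0 := by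
      rw [← h3]
      rw [show π/3 + π/(2*(3:ℝ)) = π/2 by ring]
      simp
    simp only [hb]
    rw [Real.zero_rpow (by linarith : X ≠ 0)]
    exact Real.rpow_nonneg (hbase_nonneg Y hY) Y
  · -- 3 < X
    have h3Y : 3 < Y := lt_of_lt_of_le h3 hXY
    dsimp only
    rw [Real.rpow_def_of_pos (hbase_pos X h3), Real.rpow_def_of_pos (hbase_pos Y h3Y)]
    apply Real.exp_le_exp.mpr
    -- monotonicity of g on [X, Y]
    set g : ℝ → ℝ := fun X => Real.log (2 * Real.cos (π/3 + π/(2*X))) * X with hg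
    have hder : ∀ s ∈ Set.Icc X Y, HasDerivAt g
        (Real.log (2 * Real.cos (π/3 + π/(2*s))) + (π/(2*s)) * Real.tan (π/3 + π/(2*s))) s :=
      fun s hs => aux_hasDerivAt_g (lt_of_lt_of_le h3 hs.1)
    have hmono : MonotoneOn g (Set.Icc X Y) := by
      apply monotoneOn_of_hasDerivWithinAt_nonneg (convex_Icc X Y)
        (fun s hs => (hder s hs).continuousAt.continuousWithinAt)
        (fun s hs => ((hder s (interior_subset hs)).hasDerivWithinAt))
      intro s hs
      have hs' := interior_subset hs
      have h3s : 3 < s := lt_of_lt_of_le h3 hs'.1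
      have ht0 : 0 < π/(2*s) := by positivity
      have ht6 : π/(2*s) < π/6 := by
        rw [div_lt_div_iff₀ (by linarith) (by norm_num)]
        nlinarith
      exact aux_key ht0.le ht6
    exact hmono (Set.left_mem_Icc.mpr hXY) (Set.right_mem_Icc.mpr hXY) hXY
end
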